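/- The canonical map φ : SStar_{hp}(R) → SStar_{f,hp}(R), sending ⋆ to its associated finite type semistar operation ⋆_f, is a topological retraction (it is continuous, surjective, and restricts to the identity on SStar_{f,hp}(R)) when both spaces carry their Zariski topologies. -/

import Mathlib

open Pointwise

section Instances
variable {A : Type*} {K : Type*} [CommRing A] [Field K] [Algebra A K]
instance : SMulCommClass K A K := SMulCommClass.symm A K K
end Instances

/-- A semistar operation on an integral domain `A` with quotient field `K`: a map on the
nonzero `A`-submodules of `K` satisfying `(xE)^⋆ = xE^⋆`, monotonicity, `E ⊆ E^⋆` and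
idempotency.  (We normalize the irrelevant value at `⊥` by `⊥ ↦ ⊥`.) -/
structure Semistar (A K : Type*) [CommRing A] [Field K] [Algebra A K] where
  toFun : Submodule A K → Submodule A K
  map_bot' : toFun ⊥ = ⊥
  smul' : ∀ x : K, x ≠ 0 → ∀ E : Submodule A K, E ≠ ⊥ → toFun (x • E) = x • toFun E
  mono' : ∀ E F : Submodule A K, E ≠ ⊥ → E ≤ F → toFun E ≤ toFun F
  le' : ∀ E : Submodule A K, E ≠ ⊥ → E ≤ toFun E
  idem' : ∀ E : Submodule A K, E ≠ ⊥ → toFun (toFun E) = toFun E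

section
variable {Γ : Type*} [AddCommMonoid Γ] [LinearOrder Γ]
  [CovariantClass Γ Γ (· + ·) (· < ·)] [Nontrivial Γ]
variable {A : Type*} [CommRing A] [IsDomain A]
variable {K : Type*} [Field K] [Algebra A K] [IsFractionRing A K]
variable (𝒜 : Γ → AddSubgroup A) [GradedRing 𝒜]

/-- `a` is a nonzero homogeneous element of the graded domain `A`. -/
def IsHomog (a : A) : Prop := a ≠ 0 ∧ ∃ γ : Γ, a ∈ 𝒜 γ

/-- `x ∈ K` is a (nonzero) homogeneous element of the homogeneous quotient ring `R_H`. -/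
def IsHomogElem (x : K) : Prop :=
  ∃ a s : A, IsHomog 𝒜 a ∧ IsHomog 𝒜 s ∧ x * algebraMap A K s = algebraMap A K a

/-- `x ∈ K` belongs to the homogeneous quotient ring `R_H`. -/
def MemRH (x : K) : Prop :=
  ∃ a s : A, IsHomog 𝒜 s ∧ x * algebraMap A K s = algebraMap A K a

/-- The image in `K` of an integral ideal of `A`. -/
def idealToK (I : Ideal A) : Submodule A K := Submodule.map (Algebra.linearMap A K) I

/-- `E` is a homogeneous fractional ideal of `A`. -/
def IsHomogFrac (E : Submodule A K) : Prop :=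
  ∃ s : A, IsHomog 𝒜 s ∧ ∃ I : Ideal A, Ideal.IsHomogeneous 𝒜 I ∧
    algebraMap A K s • E = idealToK (K := K) I

/-- `star` is homogeneous preserving. -/
def HomogPres (star : Submodule A K → Submodule A K) : Prop :=
  ∀ E : Submodule A K, E ≠ ⊥ → IsHomogFrac 𝒜 E → IsHomogFrac 𝒜 (star E)

/-- Membership in `E^{⋆_f} = ⋃ {F^⋆ : F nonzero finitely generated, F ⊆ E}`. -/
def MemStarF (star : Submodule A K → Submodule A K) (E : Submodule A K) (x : K) : Prop :=
  ∃ F : Submodule A K, F ≠ ⊥ ∧ F.FG ∧ F ≤ E ∧ x ∈ star F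

/-- `star` is of finite type, i.e. `⋆ = ⋆_f`. -/
def IsFiniteType (star : Submodule A K → Submodule A K) : Prop :=
  ∀ E : Submodule A K, E ≠ ⊥ → ∀ x : K, x ∈ star E ↔ MemStarF star E x

/-- The `A`-submodule `ES` of `K` generated by all products `e * v`, `e ∈ E`, `v ∈ S`. -/
def mulSet (E : Submodule A K) (S : Set K) : Submodule A K :=
  Submodule.span A {z : K | ∃ e ∈ E, ∃ v ∈ S, z = e * v}

/-- `V` is a homogeneous overring of `A`: `R ⊆ V ⊆ R_H` and `V` is generated as an
additive group by its homogeneous elements. -/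
def IsHomogOverring (V : Subring K) : Prop :=
  (∀ a : A, algebraMap A K a ∈ V) ∧ (∀ x ∈ V, MemRH 𝒜 x) ∧
  (∀ v ∈ V, v ∈ AddSubgroup.closure {x : K | x ∈ V ∧ IsHomogElem 𝒜 x})

/-- The order on semistar operations: `σ ≤ τ` iff `E^σ ⊆ E^τ` for every nonzero `E`. -/
def sle (σ τ : Semistar A K) : Prop :=
  ∀ E : Submodule A K, E ≠ ⊥ → σ.toFun E ≤ τ.toFun E

end

section Spaces
variable {Γ : Type*} [AddCommMonoid Γ] [LinearOrder Γ]
  [CovariantClass Γ Γ (· + ·) (· < ·)] [Nontrivial Γ]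
  {A : Type*} [CommRing A] [IsDomain A]
  (K : Type*) [Field K] [Algebra A K] [IsFractionRing A K]
  (𝒜 : Γ → AddSubgroup A) [GradedRing 𝒜]

/-- `SStar_{f,hp}(R)`: the set of finite type homogeneous preserving semistar
operations on `R`. -/
abbrev SStarFHP := {s : Semistar A K // IsFiniteType s.toFun ∧ HomogPres 𝒜 s.toFun}

/-- The Zariski topology on `SStar_{f,hp}(R)`, with subbasic open sets
`V_E = {⋆ : 1 ∈ E^⋆}` for `E` a nonzero `A`-submodule of `K`. -/
instance : TopologicalSpace (SStarFHP K 𝒜) :=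
  TopologicalSpace.generateFrom
    {S : Set (SStarFHP K 𝒜) | ∃ E : Submodule A K, E ≠ ⊥ ∧ S = {s | (1 : K) ∈ s.1.toFun E}}

/-- `SStar_{hp}(R)`: the set of homogeneous preserving semistar operations on `R`. -/
abbrev SStarHP := {s : Semistar A K // HomogPres 𝒜 s.toFun}

/-- The Zariski topology on `SStar_{hp}(R)`. -/
instance : TopologicalSpace (SStarHP K 𝒜) :=
  TopologicalSpace.generateFrom
    {S : Set (SStarHP K 𝒜) | ∃ E : Submodule A K, E ≠ ⊥ ∧ S = {s | (1 : K) ∈ s.1.toFun E}}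

/-- `Over_h(R)`: the set of homogeneous overrings of `R`. -/
abbrev OverH := {T : Subring K // IsHomogOverring 𝒜 T}

/-- The Zariski topology on `Over_h(R)`, with basic open sets `B_F = {T : F ⊆ T}` for `F`
a finite subset of `K`. -/
instance : TopologicalSpace (OverH K 𝒜) :=
  TopologicalSpace.generateFrom
    {S : Set (OverH K 𝒜) | ∃ F : Set K, F.Finite ∧ S = {T | F ⊆ (T.1 : Set K)}}

end Spaces

section Aux

open Pointwise

variable {A : Type*} [CommRing A] [IsDomain A]
  {K : Type*} [Field K] [Algebra A K] [IsFractionRing A K]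

theorem mem_smulP {c : K} {M : Submodule A K} {x : K} :
    x ∈ c • M ↔ ∃ m ∈ M, c • m = x := Submodule.mem_map

theorem smulP_mono {c : K} {M N : Submodule A K} (h : M ≤ N) : c • M ≤ c • N :=
  Submodule.map_mono h

theorem smulP_bot (c : K) : c • (⊥ : Submodule A K) = ⊥ := Submodule.map_bot _

theorem smulP_ne_bot {c : K} (hc : c ≠ 0) {M : Submodule A K} (hM : M ≠ ⊥) :
    c • M ≠ ⊥ := by
  intro h
  apply hM
  have h2 : c⁻¹ • (c • M) = M := by rw [smul_smul, inv_mul_cancel₀ hc, one_smul]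
  rw [← h2, h, smulP_bot]

/-- The union defining the finite-type semistar operation, as a submodule. -/
def finToFun (star : Submodule A K → Submodule A K) (E : Submodule A K) : Submodule A K :=
  ⨆ F : {F : Submodule A K // F ≠ ⊥ ∧ F.FG ∧ F ≤ E}, star F

theorem le_finToFun_of (s : Semistar A K) {E F : Submodule A K}
    (hF : F ≠ ⊥) (hfg : F.FG) (hFE : F ≤ E) : s.toFun F ≤ finToFun s.toFun E :=
  le_iSup (fun G : {F : Submodule A K // F ≠ ⊥ ∧ F.FG ∧ F ≤ E} => s.toFun G.1)
    ⟨F, hF, hfg, hFE⟩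

theorem mem_finToFun (s : Semistar A K) {E : Submodule A K} (hE : E ≠ ⊥) {x : K} :
    x ∈ finToFun s.toFun E ↔ MemStarF s.toFun E x := by
  obtain ⟨y, hyE, hy⟩ := Submodule.ne_bot_iff E |>.mp hE
  haveI : Nonempty {F : Submodule A K // F ≠ ⊥ ∧ F.FG ∧ F ≤ E} :=
    ⟨⟨Submodule.span A {y}, by simpa [Submodule.span_singleton_eq_bot] using hy,
      Submodule.fg_span_singleton y, (Submodule.span_singleton_le_iff_mem y E).mpr hyE⟩⟩
  have hdir : Directed (· ≤ ·)
      fun F : {F : Submodule A K // F ≠ ⊥ ∧ F.FG ∧ F ≤ E} => s.toFun F.1 := by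
    rintro ⟨F, hF, hFfg, hFE⟩ ⟨G, hG, hGfg, hGE⟩
    exact ⟨⟨F ⊔ G, fun h => hF (le_bot_iff.mp (h ▸ le_sup_left)), hFfg.sup hGfg,
        sup_le hFE hGE⟩,
      s.mono' _ _ hF le_sup_left, s.mono' _ _ hG le_sup_right⟩
  rw [finToFun, Submodule.mem_iSup_of_directed _ hdir]
  constructor
  · rintro ⟨⟨F, hF, hFfg, hFE⟩, hx⟩; exact ⟨F, hF, hFfg, hFE, hx⟩
  · rintro ⟨F, hF, hFfg, hFE, hx⟩; exact ⟨⟨F, hF, hFfg, hFE⟩, hx⟩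

theorem finToFun_le' (s : Semistar A K) {E : Submodule A K} : E ≤ finToFun s.toFun E := by
  intro x hx
  by_cases hx0 : x = 0
  · exact hx0 ▸ (finToFun s.toFun E).zero_mem
  · have h1 : Submodule.span A {x} ≠ ⊥ := by
      simpa [Submodule.span_singleton_eq_bot] using hx0
    exact le_finToFun_of s h1 (Submodule.fg_span_singleton x)
      ((Submodule.span_singleton_le_iff_mem x E).mpr hx)
      (s.le' _ h1 (Submodule.mem_span_singleton_self x))

theorem finToFun_mono (s : Semistar A K) {E F : Submodule A K} (h : E ≤ F) :
    finToFun s.toFun E ≤ finToFun s.toFun F :=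
  iSup_le fun G => le_finToFun_of s G.2.1 G.2.2.1 (G.2.2.2.trans h)

theorem finToFun_le_star (s : Semistar A K) {E : Submodule A K} (hE : E ≠ ⊥) :
    finToFun s.toFun E ≤ s.toFun E :=
  iSup_le fun G => s.mono' _ _ G.2.1 G.2.2.2

theorem finToFun_ne_bot (s : Semistar A K) {E : Submodule A K} (hE : E ≠ ⊥) :
    finToFun s.toFun E ≠ ⊥ :=
  fun h => hE (le_bot_iff.mp (h ▸ finToFun_le' s))

theorem finToFun_smul_le (s : Semistar A K) {x : K} (hx : x ≠ 0) {E : Submodule A K} :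
    finToFun s.toFun (x • E) ≤ x • finToFun s.toFun E := by
  refine iSup_le ?_
  rintro ⟨F, hF, hFfg, hFE⟩
  have hG : x⁻¹ • F ≠ ⊥ := smulP_ne_bot (inv_ne_zero hx) hF
  have hGfg : (x⁻¹ • F).FG := hFfg.map _
  have hGE : x⁻¹ • F ≤ E := by
    have h2 := smulP_mono (c := x⁻¹) hFE
    rwa [smul_smul, inv_mul_cancel₀ hx, one_smul] at h2
  have hFx : s.toFun F = x • s.toFun (x⁻¹ • F) := by
    conv_lhs => rw [show F = x • (x⁻¹ • F) by rw [smul_smul, mul_inv_cancel₀ hx, one_smul]]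
    exact s.smul' x hx _ hG
  rw [hFx]
  exact smulP_mono (le_finToFun_of s hG hGfg hGE)

theorem finToFun_smul (s : Semistar A K) {x : K} (hx : x ≠ 0) (E : Submodule A K)
    (hE : E ≠ ⊥) : finToFun s.toFun (x • E) = x • finToFun s.toFun E := by
  refine le_antisymm (finToFun_smul_le s hx) ?_
  have h2 := finToFun_smul_le s (inv_ne_zero hx) (E := x • E)
  rw [smul_smul, inv_mul_cancel₀ hx, one_smul] at h2
  have h3 := smulP_mono (c := x) h2
  rwa [smul_smul, mul_inv_cancel₀ hx, one_smul] at h3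

theorem finToFun_idem (s : Semistar A K) {E : Submodule A K} (hE : E ≠ ⊥) :
    finToFun s.toFun (finToFun s.toFun E) = finToFun s.toFun E := by
  refine le_antisymm ?_ (finToFun_le' s)
  intro x hx
  rw [mem_finToFun s (finToFun_ne_bot s hE)] at hx
  obtain ⟨F, hF, hFfg, hFle, hxF⟩ := hx
  obtain ⟨T, hT⟩ := hFfg
  classical
  have hex : ∀ v ∈ T, ∃ G : Submodule A K, G ≠ ⊥ ∧ G.FG ∧ G ≤ E ∧ v ∈ s.toFun G := by
    intro v hv
    exact (mem_finToFun s hE).mp (hFle (hT ▸ Submodule.subset_span hv))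
  choose! g hg1 hg2 hg3 hg4 using hex
  have hTne : T.Nonempty := by
    rcases T.eq_empty_or_nonempty with h | h
    · exfalso; apply hF; rw [← hT, h]; simp
    · exact h
  obtain ⟨v₀, hv₀⟩ := hTne
  have hGne : T.sup g ≠ ⊥ :=
    fun h => hg1 v₀ hv₀ (le_bot_iff.mp (h ▸ Finset.le_sup hv₀))
  have hGfg : (T.sup g).FG :=
    Finset.sup_induction Submodule.fg_bot (fun a ha b hb => ha.sup hb) hg2
  have hGE : T.sup g ≤ E := Finset.sup_le hg3
  have hFG : F ≤ s.toFun (T.sup g) := by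
    rw [← hT, Submodule.span_le]
    intro v hv
    have hvT : v ∈ T := hv
    exact s.mono' _ _ (hg1 v hvT) (Finset.le_sup hvT) (hg4 v hvT)
  have hxG : x ∈ s.toFun (T.sup g) := by
    have h1 : s.toFun F ≤ s.toFun (s.toFun (T.sup g)) := s.mono' _ _ hF hFG
    rw [s.idem' _ hGne] at h1
    exact h1 hxF
  exact (mem_finToFun s hE).mpr ⟨T.sup g, hGne, hGfg, hGE, hxG⟩

/-- The finite-type semistar operation associated to `s`. -/
def Semistar.fin (s : Semistar A K) : Semistar A K where
  toFun := finToFun s.toFun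
  map_bot' := by
    haveI : IsEmpty {F : Submodule A K // F ≠ ⊥ ∧ F.FG ∧ F ≤ (⊥ : Submodule A K)} :=
      ⟨fun F => F.2.1 (le_bot_iff.mp F.2.2.2)⟩
    exact iSup_of_empty _
  smul' := fun x hx E hE => finToFun_smul s hx E hE
  mono' := fun E F _ h => finToFun_mono s h
  le' := fun E _ => finToFun_le' s
  idem' := fun E hE => finToFun_idem s hE

theorem fin_isFiniteType (s : Semistar A K) : IsFiniteType (Semistar.fin s).toFun := by
  intro E hE x
  show x ∈ finToFun s.toFun E ↔ _
  rw [mem_finToFun s hE]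
  constructor
  · rintro ⟨F, hF, hfg, hle, hx⟩
    exact ⟨F, hF, hfg, hle, (mem_finToFun s hF).mpr ⟨F, hF, hfg, le_rfl, hx⟩⟩
  · rintro ⟨F, hF, hfg, hle, hx⟩
    obtain ⟨G, hG, hGfg, hGle, hxG⟩ := (mem_finToFun s hF).mp hx
    exact ⟨G, hG, hGfg, hGle.trans hle, hxG⟩

theorem Semistar.ext' {s t : Semistar A K} (h : s.toFun = t.toFun) : s = t := by
  cases s; cases t
  simp only at h
  subst h
  rfl

theorem fin_eq_self (s : Semistar A K) (hf : IsFiniteType s.toFun) :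
    Semistar.fin s = s := by
  apply Semistar.ext'
  funext E
  by_cases hE : E = ⊥
  · subst hE; rw [(Semistar.fin s).map_bot', s.map_bot']
  · ext x
    rw [show (Semistar.fin s).toFun E = finToFun s.toFun E from rfl, mem_finToFun s hE]
    exact (hf E hE x).symm

theorem algebraMap_ne_zero' {a : A} (ha : a ≠ 0) : algebraMap A K a ≠ 0 :=
  fun h => ha (IsFractionRing.injective A K (h.trans (map_zero _).symm))

theorem mem_idealToK {I : Ideal A} {x : K} :
    x ∈ idealToK (K := K) I ↔ ∃ a ∈ I, algebraMap A K a = x := Submodule.mem_map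

theorem idealToK_le_range (I : Ideal A) :
    idealToK (K := K) I ≤ LinearMap.range (Algebra.linearMap A K) := by
  rintro x ⟨a, _, rfl⟩
  exact ⟨a, rfl⟩

theorem smul_idealToK (t : A) (I : Ideal A) :
    algebraMap A K t • idealToK (K := K) I = idealToK (K := K) (Ideal.span {t} * I) := by
  ext x
  rw [mem_smulP, mem_idealToK]
  constructor
  · rintro ⟨m, hm, rfl⟩
    obtain ⟨a, ha, rfl⟩ := mem_idealToK.mp hm
    exact ⟨t * a, Ideal.mul_mem_mul (Ideal.subset_span rfl) ha, by rw [map_mul, smul_eq_mul]⟩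
  · rintro ⟨b, hb, rfl⟩
    obtain ⟨z, hz, rfl⟩ := Ideal.mem_span_singleton_mul.mp hb
    exact ⟨algebraMap A K z, mem_idealToK.mpr ⟨z, hz, rfl⟩, by rw [map_mul, smul_eq_mul]⟩

end Aux

section GradedAux

open Pointwise DirectSum

variable {Γ : Type*} [AddCommMonoid Γ] [LinearOrder Γ]
  [CovariantClass Γ Γ (· + ·) (· < ·)] [Nontrivial Γ]
  {A : Type*} [CommRing A] [IsDomain A]
  {K : Type*} [Field K] [Algebra A K] [IsFractionRing A K]
  (𝒜 : Γ → AddSubgroup A) [GradedRing 𝒜]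

theorem IsHomog.mul' {a b : A} (ha : IsHomog 𝒜 a) (hb : IsHomog 𝒜 b) :
    IsHomog 𝒜 (a * b) := by
  obtain ⟨γ, hγ⟩ := ha.2
  obtain ⟨δ, hδ⟩ := hb.2
  exact ⟨mul_ne_zero ha.1 hb.1, γ + δ, SetLike.mul_mem_graded hγ hδ⟩

theorem decompose_mul_homog {u : A} {δ : Γ} (hu : u ∈ 𝒜 δ) (a : A) (γ : Γ) :
    (DirectSum.decompose 𝒜 (u * a) (δ + γ) : A) = u * DirectSum.decompose 𝒜 a γ := by
  letI : AddLeftCancelMonoid Γ :=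
    { ‹AddCommMonoid Γ› with
      add_left_cancel := fun x y z h => by
        rcases lt_trichotomy y z with h' | h' | h'
        · have h2 := add_lt_add_left h' x
          rw [add_comm y x, add_comm z x, show x + y = x + z from h] at h2
          exact absurd h2 (lt_irrefl _)
        · exact h'
        · have h2 := add_lt_add_left h' x
          rw [add_comm z x, add_comm y x, show x + y = x + z from h] at h2
          exact absurd h2 (lt_irrefl _) }
  exact DirectSum.coe_decompose_mul_add_of_left_mem 𝒜 hu

theorem integral_homogFrac {M : Submodule A K} (hM : IsHomogFrac 𝒜 M)
    (hMr : M ≤ LinearMap.range (Algebra.linearMap A K)) :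
    ∃ J : Ideal A, J.IsHomogeneous 𝒜 ∧ idealToK (K := K) J = M := by
  obtain ⟨u, hu, I₃, hI₃, hEq⟩ := hM
  refine ⟨Submodule.comap (Algebra.linearMap A K) M, ?_, ?_⟩
  · intro γ a ha
    rw [Submodule.mem_comap] at ha
    obtain ⟨δ, hδ⟩ := hu.2
    have h1 : algebraMap A K (u * a) ∈ idealToK (K := K) I₃ := by
      rw [← hEq, mem_smulP]
      exact ⟨algebraMap A K a, ha, by rw [smul_eq_mul, ← map_mul]⟩
    have h2 : u * a ∈ I₃ := by
      obtain ⟨b, hb, hba⟩ := mem_idealToK.mp h1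
      exact (IsFractionRing.injective A K hba) ▸ hb
    have h3 : u * (DirectSum.decompose 𝒜 a γ : A) ∈ I₃ := by
      have h4 := hI₃ (δ + γ) h2
      rwa [decompose_mul_homog 𝒜 hδ a γ] at h4
    have h5 : algebraMap A K (u * (DirectSum.decompose 𝒜 a γ : A)) ∈
        algebraMap A K u • M := by
      rw [hEq]; exact mem_idealToK.mpr ⟨_, h3, rfl⟩
    obtain ⟨m, hm, hmeq⟩ := mem_smulP.mp h5
    have h6 : m = algebraMap A K (DirectSum.decompose 𝒜 a γ : A) := by
      rw [smul_eq_mul, map_mul] at hmeq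
      exact mul_left_cancel₀ (algebraMap_ne_zero' hu.1) hmeq
    rw [Submodule.mem_comap]
    exact h6 ▸ hm
  · rw [idealToK, Submodule.map_comap_eq]
    exact inf_eq_right.mpr hMr

theorem exists_fg_homog_over {I₂ : Ideal A} (hI₂ : I₂.IsHomogeneous 𝒜)
    {G : Submodule A K} (hGfg : G.FG) (hGle : G ≤ idealToK (K := K) I₂) :
    ∃ J : Ideal A, J.IsHomogeneous 𝒜 ∧ J.FG ∧ G ≤ idealToK (K := K) J ∧ J ≤ I₂ := by
  classical
  obtain ⟨T, hT⟩ := hGfg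
  have hchoice : ∀ v ∈ T, ∃ a : A, a ∈ I₂ ∧ algebraMap A K a = v := by
    intro v hv
    obtain ⟨a, ha, hav⟩ := mem_idealToK.mp (hGle (hT ▸ Submodule.subset_span hv))
    exact ⟨a, ha, hav⟩
  choose! f hf1 hf2 using hchoice
  set S : Finset A := T.biUnion
    (fun v => (DirectSum.decompose 𝒜 (f v)).support.image
      (fun γ => (DirectSum.decompose 𝒜 (f v) γ : A))) with hS
  have hmemS : ∀ x ∈ S, ∃ v ∈ T, ∃ γ : Γ, (DirectSum.decompose 𝒜 (f v) γ : A) = x := by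
    intro x hx
    obtain ⟨v, hv, hx2⟩ := Finset.mem_biUnion.mp hx
    obtain ⟨γ, _, hγ⟩ := Finset.mem_image.mp hx2
    exact ⟨v, hv, γ, hγ⟩
  refine ⟨Ideal.span ↑S, ?_, ⟨S, rfl⟩, ?_, ?_⟩
  · apply Ideal.homogeneous_span
    intro x hx
    obtain ⟨v, _, γ, hγ⟩ := hmemS x hx
    exact ⟨γ, hγ ▸ SetLike.coe_mem _⟩
  · rw [← hT, Submodule.span_le]
    intro v hv
    have hvT : v ∈ T := hv
    have hfv : f v ∈ Ideal.span (↑S : Set A) := by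
      rw [← DirectSum.sum_support_decompose 𝒜 (f v)]
      refine Ideal.sum_mem _ fun γ hγ => Ideal.subset_span ?_
      exact Finset.mem_coe.mpr (Finset.mem_biUnion.mpr ⟨v, hvT, Finset.mem_image_of_mem _ hγ⟩)
    exact mem_idealToK.mpr ⟨f v, hfv, hf2 v hvT⟩
  · rw [Ideal.span_le]
    intro x hx
    obtain ⟨v, hvT, γ, hγ⟩ := hmemS x hx
    exact hγ ▸ hI₂ γ (hf1 v hvT)

theorem fin_homogPres (s : Semistar A K) (hhp : HomogPres 𝒜 s.toFun) :
    HomogPres 𝒜 (Semistar.fin s).toFun := by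
  intro E hE hEh
  obtain ⟨sd, hsd, I₀, hI₀, hsE⟩ := hEh
  obtain ⟨t, ht, I₁, hI₁, htE⟩ := hhp E hE ⟨sd, hsd, I₀, hI₀, hsE⟩
  have hw : IsHomog 𝒜 (t * sd) := IsHomog.mul' 𝒜 ht hsd
  have hwK : algebraMap A K (t * sd) ≠ 0 := algebraMap_ne_zero' hw.1
  have hI₂ : (Ideal.span {t} * I₀).IsHomogeneous 𝒜 :=
    (Ideal.homogeneous_span 𝒜 {t} (fun x hx => by
      rcases hx with rfl
      exact ht.2)).mul hI₀
  have hwE : algebraMap A K (t * sd) • E = idealToK (K := K) (Ideal.span {t} * I₀) := by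
    rw [map_mul, mul_smul, hsE, smul_idealToK]
  have hI₂ne : idealToK (K := K) (Ideal.span {t} * I₀) ≠ ⊥ := by
    rw [← hwE]; exact smulP_ne_bot hwK hE
  have hsI₂ : s.toFun (idealToK (K := K) (Ideal.span {t} * I₀)) ≤
      LinearMap.range (Algebra.linearMap A K) := by
    have h1 : s.toFun (idealToK (K := K) (Ideal.span {t} * I₀)) =
        algebraMap A K (t * sd) • s.toFun E := by
      rw [← hwE, s.smul' _ hwK E hE]
    rw [h1, map_mul, mul_comm, mul_smul, htE, smul_idealToK]
    exact idealToK_le_range _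
  have hMw : algebraMap A K (t * sd) • finToFun s.toFun E =
      finToFun s.toFun (idealToK (K := K) (Ideal.span {t} * I₀)) := by
    rw [← finToFun_smul s hwK E hE, hwE]
  have hMrange : finToFun s.toFun (idealToK (K := K) (Ideal.span {t} * I₀)) ≤
      LinearMap.range (Algebra.linearMap A K) :=
    (finToFun_le_star s hI₂ne).trans hsI₂
  refine ⟨t * sd, hw, Submodule.comap (Algebra.linearMap A K)
    (finToFun s.toFun (idealToK (K := K) (Ideal.span {t} * I₀))), ?_, ?_⟩
  · intro γ a ha
    rw [Submodule.mem_comap] at ha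
    obtain ⟨G, hG, hGfg, hGle, haG⟩ := (mem_finToFun s hI₂ne).mp ha
    obtain ⟨J, hJh, hJfg, hGJ, hJI₂⟩ := exists_fg_homog_over 𝒜 hI₂ hGfg hGle
    have hidJ_ne : idealToK (K := K) J ≠ ⊥ := fun h => hG (le_bot_iff.mp (h ▸ hGJ))
    have hidJ_le : idealToK (K := K) J ≤ idealToK (K := K) (Ideal.span {t} * I₀) :=
      Submodule.map_mono hJI₂
    have haJ : algebraMap A K a ∈ s.toFun (idealToK (K := K) J) :=
      s.mono' _ _ hG hGJ haG
    have hsJ_frac : IsHomogFrac 𝒜 (s.toFun (idealToK (K := K) J)) :=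
      hhp _ hidJ_ne ⟨1, ⟨one_ne_zero, 0, SetLike.one_mem_graded 𝒜⟩, J, hJh,
        by rw [map_one, one_smul]⟩
    have hsJ_range : s.toFun (idealToK (K := K) J) ≤
        LinearMap.range (Algebra.linearMap A K) :=
      (s.mono' _ _ hidJ_ne hidJ_le).trans hsI₂
    obtain ⟨J', hJ'h, hJ'eq⟩ := integral_homogFrac 𝒜 hsJ_frac hsJ_range
    have haJ' : a ∈ J' := by
      rw [← hJ'eq] at haJ
      obtain ⟨b, hb, hba⟩ := mem_idealToK.mp haJ
      exact (IsFractionRing.injective A K hba) ▸ hb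
    rw [Submodule.mem_comap]
    have h5 : algebraMap A K (DirectSum.decompose 𝒜 a γ : A) ∈
        s.toFun (idealToK (K := K) J) :=
      hJ'eq ▸ mem_idealToK.mpr ⟨_, hJ'h γ haJ', rfl⟩
    exact le_finToFun_of s hidJ_ne (Submodule.FG.map (f := Algebra.linearMap A K) hJfg) hidJ_le h5
  · show algebraMap A K (t * sd) • finToFun s.toFun E =
      Submodule.map (Algebra.linearMap A K) (Submodule.comap (Algebra.linearMap A K)
        (finToFun s.toFun (idealToK (K := K) (Ideal.span {t} * I₀))))
    rw [hMw, Submodule.map_comap_eq]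
    exact (inf_eq_right.mpr hMrange).symm

end GradedAux

/-- The canonical map `φ : SStar_{hp}(R) → SStar_{f,hp}(R)`, `⋆ ↦ ⋆_f`,
is a topological retraction: it is continuous, surjective, and restricts to the identity
on `SStar_{f,hp}(R)`. -/
theorem sstarHP_retracts_onto_sstarFHP
    {Γ : Type*} [AddCommMonoid Γ] [LinearOrder Γ]
    [CovariantClass Γ Γ (· + ·) (· < ·)] [Nontrivial Γ]
    {A : Type*} [CommRing A] [IsDomain A]
    (K : Type*) [Field K] [Algebra A K] [IsFractionRing A K]
    (𝒜 : Γ → AddSubgroup A) [GradedRing 𝒜] :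
    ∃ φ : SStarHP K 𝒜 → SStarFHP K 𝒜,
      (∀ s : SStarHP K 𝒜, ∀ E : Submodule A K, E ≠ ⊥ → ∀ x : K,
        x ∈ (φ s).1.toFun E ↔ MemStarF s.1.toFun E x) ∧
      Continuous φ ∧ Function.Surjective φ ∧
      ∀ (s : Semistar A K) (hf : IsFiniteType s.toFun) (hhp : HomogPres 𝒜 s.toFun),
        φ ⟨s, hhp⟩ = ⟨s, hf, hhp⟩ := by
  classical
  refine ⟨fun s => ⟨Semistar.fin s.1, fin_isFiniteType s.1, fin_homogPres 𝒜 s.1 s.2⟩,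
    ?_, ?_, ?_, ?_⟩
  · intro s E hE x
    exact mem_finToFun s.1 hE
  · apply continuous_generateFrom_iff.mpr
    rintro S ⟨E, hE, rfl⟩
    have key : {s : SStarHP K 𝒜 | (1 : K) ∈ finToFun s.1.toFun E} =
        ⋃ F : {F : Submodule A K // F ≠ ⊥ ∧ F.FG ∧ F ≤ E},
          {s : SStarHP K 𝒜 | (1 : K) ∈ s.1.toFun F.1} := by
      ext s
      simp only [Set.mem_setOf_eq, Set.mem_iUnion]
      rw [mem_finToFun s.1 hE]
      constructor
      · rintro ⟨F, h1, h2, h3, h4⟩; exact ⟨⟨F, h1, h2, h3⟩, h4⟩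
      · rintro ⟨⟨F, h1, h2, h3⟩, h4⟩; exact ⟨F, h1, h2, h3, h4⟩
    show IsOpen {s : SStarHP K 𝒜 | (1 : K) ∈ finToFun s.1.toFun E}
    rw [key]
    exact isOpen_iUnion fun F =>
      TopologicalSpace.isOpen_generateFrom_of_mem ⟨F.1, F.2.1, rfl⟩
  · rintro ⟨s, hf, hhp⟩
    exact ⟨⟨s, hhp⟩, Subtype.ext (fin_eq_self s hf)⟩
  · intro s hf hhp
    exact Subtype.ext (fin_eq_self s hf)
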